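/- Let A be a nonempty arrangement in a finite-dimensional complex vector space, fix H_0 = ker α_0 ∈ A, and let (A, A', A'') be the associated triple. Every θ ∈ D(A) satisfies θ(α_0 S) ⊆ α_0 S, and hence induces a derivation θ̄ of S̄ = S/α_0 S (identified with Sym(H_0^*)) by θ̄(f + α_0 S) = θ(f) + α_0 S. Then θ̄ ∈ D(A''); moreover, if θ is homogeneous of polynomial degree p and θ̄ ≠ 0, then θ̄ is homogeneous of polynomial degree p. -/

import Mathlib

open scoped Classical

set_option synthInstance.maxHeartbeats 1000000
set_option maxHeartbeats 1000000

universe u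

namespace IndFreeArr

/-- A hyperplane in `V`: the kernel of a nonzero linear functional. -/
def IsHyperplane (V : Type u) [AddCommGroup V] [Module ℂ V] (H : Submodule ℂ V) : Prop :=
  ∃ φ : V →ₗ[ℂ] ℂ, φ ≠ 0 ∧ LinearMap.ker φ = H

/-- A (central) hyperplane arrangement: a finite set of hyperplanes. -/
def IsArrangement (V : Type u) [AddCommGroup V] [Module ℂ V]
    (A : Finset (Submodule ℂ V)) : Prop :=
  ∀ H ∈ A, IsHyperplane V H

/-- The algebra of polynomial functions on `V`, i.e. the subalgebra of `V → ℂ`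
generated by the linear functionals (a model of `Sym(V*)` for `V` finite dimensional). -/
noncomputable def Poly (V : Type u) [AddCommGroup V] [Module ℂ V] : Subalgebra ℂ (V → ℂ) :=
  Algebra.adjoin ℂ (Set.range fun φ : V →ₗ[ℂ] ℂ => (φ : V → ℂ))

/-- A linear functional viewed as a polynomial function. -/
noncomputable def linToPoly (V : Type u) [AddCommGroup V] [Module ℂ V] (φ : V →ₗ[ℂ] ℂ) : Poly V :=
  ⟨(φ : V → ℂ), Algebra.subset_adjoin ⟨φ, rfl⟩⟩

/-- `Q` is a defining polynomial of the arrangement `A`: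
`Q = ∏_{H ∈ A} α_H` for some choice of linear forms `α_H` with `ker α_H = H`. -/
noncomputable def IsDefiningPoly (V : Type u) [AddCommGroup V] [Module ℂ V]
    (A : Finset (Submodule ℂ V)) (Q : Poly V) : Prop :=
  ∃ α : Submodule ℂ V → (V →ₗ[ℂ] ℂ),
    (∀ H ∈ A, α H ≠ 0 ∧ LinearMap.ker (α H) = H) ∧
    Q = ∏ H ∈ A, linToPoly V (α H)

/-- The module `D(A)` of `A`-derivations: derivations `θ` of `S = Poly V` with
`θ(Q) ∈ Q·S` for the defining polynomial(s) `Q` of `A`. -/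
noncomputable def DerA (V : Type u) [AddCommGroup V] [Module ℂ V] (A : Finset (Submodule ℂ V)) :
    Submodule (Poly V) (Derivation ℂ (Poly V) (Poly V)) where
  carrier := {θ | ∀ Q : Poly V, IsDefiningPoly V A Q → ∃ f : Poly V, θ Q = Q * f}
  add_mem' := by
    intro θ₁ θ₂ h₁ h₂ Q hQ
    obtain ⟨f₁, e₁⟩ := h₁ Q hQ
    obtain ⟨f₂, e₂⟩ := h₂ Q hQ
    exact ⟨f₁ + f₂, by simp [e₁, e₂, mul_add]⟩
  zero_mem' := by
    intro Q hQ
    exact ⟨0, by simp⟩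
  smul_mem' := by
    intro c θ h Q hQ
    obtain ⟨f, e⟩ := h Q hQ
    refine ⟨c * f, ?_⟩
    simp only [Derivation.smul_apply, e, smul_eq_mul]
    ring

/-- The arrangement `A` is free: `D(A)` is a free module over `S = Poly V`. -/
def IsFree (V : Type u) [AddCommGroup V] [Module ℂ V] (A : Finset (Submodule ℂ V)) : Prop :=
  Module.Free (Poly V) (DerA V A)

/-- A polynomial function is homogeneous of degree `p`. -/
def IsHomog (V : Type u) [AddCommGroup V] [Module ℂ V] (p : ℕ) (f : Poly V) : Prop :=
  ∀ (t : ℂ) (v : V), (f : V → ℂ) (t • v) = t ^ p * (f : V → ℂ) v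

/-- A derivation is homogeneous of polynomial degree `p`: it sends every linear form to a
homogeneous polynomial of degree `p`. -/
def IsDerHomog (V : Type u) [AddCommGroup V] [Module ℂ V] (p : ℕ)
    (θ : Derivation ℂ (Poly V) (Poly V)) : Prop :=
  ∀ φ : V →ₗ[ℂ] ℂ, IsHomog V p (θ (linToPoly V φ))

/-- `e` is the multiset of exponents of `A`: the multiset of polynomial degrees of some
homogeneous basis of `D(A)`. -/
def IsExponents (V : Type u) [AddCommGroup V] [Module ℂ V]
    (A : Finset (Submodule ℂ V)) (e : Multiset ℕ) : Prop :=
  ∃ (n : ℕ) (d : Fin n → ℕ) (b : Module.Basis (Fin n) (Poly V) (DerA V A)),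
    (∀ i, IsDerHomog V (d i) ↑(b i)) ∧ e = Multiset.map d Finset.univ.val

/-- The restriction `A^X = {X ∩ H : H ∈ A, X ⊄ H}` of `A` to `X`,
as an arrangement in the space `X`. -/
noncomputable def restrict (V : Type u) [AddCommGroup V] [Module ℂ V]
    (A : Finset (Submodule ℂ V)) (X : Submodule ℂ V) : Finset (Submodule ℂ ↥X) :=
  (A.filter fun H => ¬ X ≤ H).image fun H => Submodule.comap X.subtype H

/-- The class of inductively free arrangements: the smallest class containing all empty
arrangements and closed under the addition of a hyperplane `H₀` such that
`A' = A \ {H₀}` and `A'' = A^{H₀}` are inductively free with `exp A'' ⊆ exp A'`. -/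
inductive IsIndFree : ∀ (V : Type u) [AddCommGroup V] [Module ℂ V],
    Finset (Submodule ℂ V) → Prop where
  | empty (V : Type u) [AddCommGroup V] [Module ℂ V] : IsIndFree V ∅
  | step (V : Type u) [AddCommGroup V] [Module ℂ V] (A : Finset (Submodule ℂ V))
      (H₀ : Submodule ℂ V) (hmem : H₀ ∈ A)
      (h' : IsIndFree V (A.erase H₀))
      (h'' : IsIndFree ↥H₀ (restrict V A H₀))
      (hexp : ∃ e'' e' : Multiset ℕ, IsExponents ↥H₀ (restrict V A H₀) e'' ∧
        IsExponents V (A.erase H₀) e' ∧ e'' ≤ e') :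
      IsIndFree V A

/-- `X` belongs to the intersection lattice `L(A)`:
`X` is an intersection of some subset of `A` (with `X = V` for the empty subset). -/
def InLattice (V : Type u) [AddCommGroup V] [Module ℂ V]
    (A : Finset (Submodule ℂ V)) (X : Submodule ℂ V) : Prop :=
  ∃ s : Finset (Submodule ℂ V), s ⊆ A ∧ X = s.inf id

/-- `A` is hereditarily inductively free: every restriction `A^X`, `X ∈ L(A)`,
is inductively free. -/
def IsHerIndFree (V : Type u) [AddCommGroup V] [Module ℂ V]
    (A : Finset (Submodule ℂ V)) : Prop :=
  ∀ X : Submodule ℂ V, InLattice V A X → IsIndFree ↥X (restrict V A X)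


/-- Restriction of functions on `V` to a submodule `X`, as a `ℂ`-algebra homomorphism. -/
def precompAlgHom (V : Type u) [AddCommGroup V] [Module ℂ V] (X : Submodule ℂ V) :
    (V → ℂ) →ₐ[ℂ] (↥X → ℂ) where
  toFun f := fun x => f ↑x
  map_one' := rfl
  map_mul' _ _ := rfl
  map_zero' := rfl
  map_add' _ _ := rfl
  commutes' _ := rfl

lemma poly_map_le (V : Type u) [AddCommGroup V] [Module ℂ V] (X : Submodule ℂ V) :
    Subalgebra.map (precompAlgHom V X) (Poly V) ≤ Poly ↥X := by
  rw [Poly, AlgHom.map_adjoin]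
  refine Algebra.adjoin_le ?_
  rintro g ⟨-, ⟨φ, rfl⟩, rfl⟩
  exact Algebra.subset_adjoin ⟨φ.comp X.subtype, rfl⟩

/-- The restriction homomorphism `S = Poly V → S̄ ≅ Sym(X*) = Poly X`, realizing the
quotient of `S` by the ideal of functions vanishing on `X`. -/
noncomputable def resHom (V : Type u) [AddCommGroup V] [Module ℂ V] (X : Submodule ℂ V) :
    Poly V →ₐ[ℂ] Poly ↥X :=
  ((precompAlgHom V X).comp (Poly V).val).codRestrict (Poly ↥X)
    (fun f => poly_map_le V X ⟨↑f, f.2, rfl⟩)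

section Aux

variable {V : Type u} [AddCommGroup V] [Module ℂ V]

lemma exists_smul_of_ker_le {α β : V →ₗ[ℂ] ℂ} (hα : α ≠ 0)
    (h : LinearMap.ker α ≤ LinearMap.ker β) : ∃ c : ℂ, β = c • α := by
  obtain ⟨v, hv⟩ : ∃ v, α v ≠ 0 := by
    by_contra h'; push_neg at h'; exact hα (LinearMap.ext fun x => h' x)
  refine ⟨β v / α v, LinearMap.ext fun x => ?_⟩
  have hx : x - (α x / α v) • v ∈ LinearMap.ker α := by
    simp [LinearMap.mem_ker, div_mul_cancel₀ _ hv]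
  have hb := h hx
  rw [LinearMap.mem_ker, map_sub, map_smul, sub_eq_zero, smul_eq_mul] at hb
  rw [hb, LinearMap.smul_apply, smul_eq_mul]
  field_simp

@[simp] lemma linToPoly_apply (φ : V →ₗ[ℂ] ℂ) (x : V) :
    ((linToPoly V φ : Poly V) : V → ℂ) x = φ x := rfl

@[simp] lemma poly_mul_apply (f g : Poly V) (x : V) :
    ((f * g : Poly V) : V → ℂ) x = (f : V → ℂ) x * (g : V → ℂ) x := rfl

lemma linToPoly_smul (c : ℂ) (φ : V →ₗ[ℂ] ℂ) :
    linToPoly V (c • φ) = c • linToPoly V φ := by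
  apply Subtype.ext
  funext x
  simp [linToPoly]

end Aux
section Equiv

open MvPolynomial

variable {V : Type u} [AddCommGroup V] [Module ℂ V] [FiniteDimensional ℂ V]

/-- A basis adapted to a nonzero functional: its 0-th coordinate functional is `α`. -/
lemma exists_adapted_basis (α : V →ₗ[ℂ] ℂ) (hα : α ≠ 0) :
    ∃ (m : ℕ) (b : Module.Basis (Fin (m + 1)) ℂ V), b.coord 0 = α := by
  obtain ⟨u, hu⟩ : ∃ u, α u ≠ 0 := by
    by_contra h'; push_neg at h'; exact hα (LinearMap.ext fun x => h' x)
  set v := (α u)⁻¹ • u with hv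
  have hαv : α v = 1 := by
    rw [hv, map_smul, smul_eq_mul, inv_mul_cancel₀ hu]
  set K := LinearMap.ker α with hK
  set m := Module.finrank ℂ K with hm
  let b' : Module.Basis (Fin m) ℂ K := Module.finBasis ℂ K
  set w : Fin (m + 1) → V := Fin.cons v (fun i => (b' i : V)) with hw
  have hspan' : Submodule.span ℂ (Set.range fun i => ((b' i : V))) = K := by
    have : (Set.range fun i => ((b' i : V))) = K.subtype '' Set.range b' := by
      rw [← Set.range_comp]; rfl
    rw [this, ← Submodule.map_span, b'.span_eq, Submodule.map_top, Submodule.range_subtype]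
  have hli : LinearIndependent ℂ w := by
    rw [hw, linearIndependent_fin_cons]
    constructor
    · exact b'.linearIndependent.map' K.subtype (Submodule.ker_subtype K)
    · rw [hspan']
      intro hvK
      rw [hK, LinearMap.mem_ker, hαv] at hvK
      exact one_ne_zero hvK
  have hsp : ⊤ ≤ Submodule.span ℂ (Set.range w) := by
    intro x _
    have h1 : x - α x • v ∈ K := by
      rw [hK, LinearMap.mem_ker, map_sub, map_smul, hαv, smul_eq_mul, mul_one, sub_self]
    have h2 : K ≤ Submodule.span ℂ (Set.range w) := by
      rw [← hspan']
      apply Submodule.span_mono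
      rintro _ ⟨i, rfl⟩
      exact ⟨i.succ, by simp [hw]⟩
    have h3 : v ∈ Submodule.span ℂ (Set.range w) :=
      Submodule.subset_span ⟨0, by simp [hw]⟩
    have := Submodule.add_mem _ (h2 h1) (Submodule.smul_mem _ (α x) h3)
    simpa [sub_add_cancel] using this
  set b := Module.Basis.mk hli hsp with hb
  refine ⟨m, b, ?_⟩
  apply b.ext
  intro i
  rw [Module.Basis.coord_apply, Module.Basis.repr_self]
  induction i using Fin.cases with
  | zero =>
      rw [show b 0 = w 0 from Module.Basis.mk_apply hli hsp 0]
      simp [hw, hαv]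
  | succ j =>
      rw [show b j.succ = w j.succ from Module.Basis.mk_apply hli hsp j.succ]
      have : w j.succ ∈ K := by simp [hw]
      rw [hK, LinearMap.mem_ker] at this
      rw [this]
      simp [Finsupp.single_apply, Fin.succ_ne_zero]

end Equiv
section Equiv2

open MvPolynomial

variable {V : Type u} [AddCommGroup V] [Module ℂ V] [FiniteDimensional ℂ V]

lemma aeval_eq_eval' {n : ℕ} (c : Fin n → ℂ) (P : MvPolynomial (Fin n) ℂ) :
    MvPolynomial.aeval c P = MvPolynomial.eval c P := by
  rw [← MvPolynomial.coe_aeval_eq_eval]; rfl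

/-- Evaluation of polynomials using basis coordinates. -/
noncomputable def evS {n : ℕ} (b : Module.Basis (Fin n) ℂ V) :
    MvPolynomial (Fin n) ℂ →ₐ[ℂ] Poly V :=
  MvPolynomial.aeval (fun i => linToPoly V (b.coord i))

lemma evS_point {n : ℕ} (b : Module.Basis (Fin n) ℂ V) (P : MvPolynomial (Fin n) ℂ) (x : V) :
    ((evS b P : Poly V) : V → ℂ) x = MvPolynomial.eval (fun i => b.coord i x) P := by
  set ev_x : Poly V →ₐ[ℂ] ℂ := (Pi.evalAlgHom ℂ (fun _ => ℂ) x).comp (Poly V).val with hev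
  have h3 : ev_x.comp (evS b) = MvPolynomial.aeval (fun i => b.coord i x) := by
    apply MvPolynomial.algHom_ext
    intro i
    simp [evS, hev]
  have h1 : ((evS b P : Poly V) : V → ℂ) x = (ev_x.comp (evS b)) P := rfl
  rw [h1, h3, aeval_eq_eval']

lemma evS_bijective {n : ℕ} (b : Module.Basis (Fin n) ℂ V) : Function.Bijective (evS b) := by
  constructor
  · rw [injective_iff_map_eq_zero]
    intro P hP
    apply MvPolynomial.funext (q := 0)
    intro y
    have h := congrArg (fun f : Poly V => (f : V → ℂ) (b.equivFun.symm y)) hP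
    rw [evS_point] at h
    have hcoord : (fun i => b.coord i (b.equivFun.symm y)) = y := by
      funext i
      rw [Module.Basis.coord_apply, ← Module.Basis.equivFun_apply, b.equivFun.apply_symm_apply]
    rw [hcoord] at h
    simpa using h
  · -- surjectivity
    intro g
    set evF : MvPolynomial (Fin n) ℂ →ₐ[ℂ] (V → ℂ) :=
      MvPolynomial.aeval (fun i => ((b.coord i : V →ₗ[ℂ] ℂ) : V → ℂ)) with hevF
    have hcomp : (Poly V).val.comp (evS b) = evF := by
      apply MvPolynomial.algHom_ext
      intro i
      simp [evS, hevF, linToPoly]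
    have hrange : Poly V ≤ evF.range := by
      rw [hevF, ← Algebra.adjoin_range_eq_range_aeval]
      apply Algebra.adjoin_le
      rintro _ ⟨φ, rfl⟩
      show (φ : V → ℂ) ∈ _
      have hfun : (φ : V → ℂ) = ∑ i, φ (b i) • ((b.coord i : V →ₗ[ℂ] ℂ) : V → ℂ) := by
        funext x
        have hs := b.sum_repr x
        conv_lhs => rw [← hs]
        rw [map_sum]
        simp [Module.Basis.coord_apply, mul_comm]
      rw [hfun]
      apply Subalgebra.sum_mem
      intro i _
      apply Subalgebra.smul_mem
      exact Algebra.subset_adjoin ⟨i, rfl⟩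
    obtain ⟨P, hP⟩ := hrange g.2
    refine ⟨P, Subtype.ext ?_⟩
    have h5 : ((evS b P : Poly V) : V → ℂ) = evF P := by
      rw [← hcomp]; rfl
    rw [h5]; exact hP

/-- The algebra isomorphism `MvPolynomial ≃ Poly V` adapted to a nonzero functional `α`. -/
lemma exists_poly_equiv (α : V →ₗ[ℂ] ℂ) (hα : α ≠ 0) :
    ∃ (m : ℕ) (E : MvPolynomial (Fin (m + 1)) ℂ ≃ₐ[ℂ] Poly V),
      E (MvPolynomial.X 0) = linToPoly V α ∧
      ∀ (y : Fin (m + 1) → ℂ), ∃ x : V, α x = y 0 ∧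
        ∀ P : MvPolynomial (Fin (m + 1)) ℂ,
          ((E P : Poly V) : V → ℂ) x = MvPolynomial.eval y P := by
  obtain ⟨m, b, hb⟩ := exists_adapted_basis α hα
  refine ⟨m, AlgEquiv.ofBijective (evS b) (evS_bijective b), ?_, ?_⟩
  · show evS b (MvPolynomial.X 0) = linToPoly V α
    rw [evS, MvPolynomial.aeval_X, hb]
  · intro y
    refine ⟨b.equivFun.symm y, ?_, ?_⟩
    · rw [← hb, Module.Basis.coord_apply, ← Module.Basis.equivFun_apply, b.equivFun.apply_symm_apply]
    · intro P
      show ((evS b P : Poly V) : V → ℂ) _ = _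
      have hcoord : (fun i => b.coord i (b.equivFun.symm y)) = y := by
        funext i
        rw [Module.Basis.coord_apply, ← Module.Basis.equivFun_apply, b.equivFun.apply_symm_apply]
      rw [evS_point, hcoord]

end Equiv2
section PrimeDvd

open MvPolynomial

variable {V : Type u} [AddCommGroup V] [Module ℂ V] [FiniteDimensional ℂ V]

lemma prime_X_zero (m : ℕ) : Prime (MvPolynomial.X 0 : MvPolynomial (Fin (m + 1)) ℂ) := by
  rw [← MulEquiv.prime_iff (MvPolynomial.finSuccEquiv ℂ m).toRingEquiv.toMulEquiv]
  have : (MvPolynomial.finSuccEquiv ℂ m).toRingEquiv.toMulEquiv (MvPolynomial.X 0)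
      = Polynomial.X := MvPolynomial.finSuccEquiv_X_zero
  rw [this]
  exact Polynomial.prime_X

lemma prime_linToPoly {α : V →ₗ[ℂ] ℂ} (hα : α ≠ 0) : Prime (linToPoly V α) := by
  obtain ⟨m, E, hE, -⟩ := exists_poly_equiv α hα
  have h1 := (MulEquiv.prime_iff E.toRingEquiv.toMulEquiv (p := MvPolynomial.X 0)).mpr (prime_X_zero m)
  have h2 : E.toRingEquiv.toMulEquiv (MvPolynomial.X 0) = E (MvPolynomial.X 0) := rfl
  rw [h2, hE] at h1
  exact h1

lemma X_zero_dvd_of_vanishing {m : ℕ} (P : MvPolynomial (Fin (m + 1)) ℂ)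
    (h : ∀ y : Fin (m + 1) → ℂ, y 0 = 0 → MvPolynomial.eval y P = 0) :
    (MvPolynomial.X 0 : MvPolynomial (Fin (m + 1)) ℂ) ∣ P := by
  set q := MvPolynomial.finSuccEquiv ℂ m P with hq
  have hc : q.coeff 0 = 0 := by
    apply MvPolynomial.funext (q := 0)
    intro s
    have h0 := h (Fin.cons 0 s) (by simp)
    rw [MvPolynomial.eval_eq_eval_mv_eval'] at h0
    rw [← Polynomial.coeff_zero_eq_eval_zero, Polynomial.coeff_map] at h0
    simpa using h0
  have hX : Polynomial.X ∣ q := Polynomial.X_dvd_iff.mpr hc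
  have hmap := map_dvd (MvPolynomial.finSuccEquiv ℂ m).symm hX
  have h1 : (MvPolynomial.finSuccEquiv ℂ m).symm Polynomial.X
      = (MvPolynomial.X 0 : MvPolynomial (Fin (m + 1)) ℂ) := by
    rw [← MvPolynomial.finSuccEquiv_X_zero (R := ℂ) (n := m), AlgEquiv.symm_apply_apply]
  have h2 : (MvPolynomial.finSuccEquiv ℂ m).symm q = P := AlgEquiv.symm_apply_apply _ _
  rwa [h1, h2] at hmap

lemma linToPoly_dvd_of_vanishing {α : V →ₗ[ℂ] ℂ} (hα : α ≠ 0) (f : Poly V)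
    (hf : ∀ x : V, α x = 0 → (f : V → ℂ) x = 0) : linToPoly V α ∣ f := by
  obtain ⟨m, E, hE, hpt⟩ := exists_poly_equiv α hα
  set P := E.symm f with hP
  have hdvd : (MvPolynomial.X 0 : MvPolynomial (Fin (m + 1)) ℂ) ∣ P := by
    apply X_zero_dvd_of_vanishing
    intro y hy
    obtain ⟨x, hx0, hxev⟩ := hpt y
    rw [← hxev P, hP, AlgEquiv.apply_symm_apply]
    exact hf x (by rw [hx0, hy])
  have := map_dvd E hdvd
  rwa [hE, hP, AlgEquiv.apply_symm_apply] at this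

end PrimeDvd
section Res

variable {V : Type u} [AddCommGroup V] [Module ℂ V]

@[simp] lemma resHom_apply (X : Submodule ℂ V) (f : Poly V) (x : ↥X) :
    ((resHom V X f : Poly ↥X) : ↥X → ℂ) x = (f : V → ℂ) ↑x := rfl

lemma resHom_lin (X : Submodule ℂ V) (φ : V →ₗ[ℂ] ℂ) :
    resHom V X (linToPoly V φ) = linToPoly ↥X (φ.comp X.subtype) := Subtype.ext rfl

lemma resHom_surjective (X : Submodule ℂ V) : Function.Surjective (resHom V X) := by
  intro g
  have hg : (g : ↥X → ℂ) ∈ Poly ↥X := g.2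
  have hle : Poly ↥X ≤ Subalgebra.map (Poly ↥X).val (resHom V X).range := by
    apply Algebra.adjoin_le
    rintro _ ⟨ψ, rfl⟩
    obtain ⟨φ, hφ⟩ := LinearMap.exists_extend ψ
    refine ⟨resHom V X (linToPoly V φ), ⟨linToPoly V φ, rfl⟩, ?_⟩
    rw [resHom_lin, hφ]
    rfl
  obtain ⟨h, hmem, hval⟩ := hle hg
  obtain ⟨f, hf⟩ := hmem
  refine ⟨f, ?_⟩
  have hf' : resHom V X f = h := hf
  rw [hf']
  exact Subtype.ext hval

lemma resHom_eq_zero_iff (X : Submodule ℂ V) (f : Poly V) :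
    resHom V X f = 0 ↔ ∀ x : V, x ∈ X → (f : V → ℂ) x = 0 := by
  constructor
  · intro h x hx
    have := congrArg (fun g : Poly ↥X => (g : ↥X → ℂ) ⟨x, hx⟩) h
    simpa using this
  · intro h
    apply Subtype.ext
    funext x
    exact h ↑x x.2

end Res
section Push

variable {A : Type*} {B : Type*} [CommRing A] [CommRing B] [Algebra ℂ A] [Algebra ℂ B]

/-- Push a derivation forward along a surjective algebra hom whose "kernel" it preserves. -/
noncomputable def pushDer (π : A →ₐ[ℂ] B) (hsurj : Function.Surjective π)
    (θ : Derivation ℂ A A) (hwd : ∀ f g : A, π f = π g → π (θ f) = π (θ g)) :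
    Derivation ℂ B B where
  toFun g := π (θ (Function.surjInv hsurj g))
  map_add' x y := by
    have hD : ∀ f : A, π (θ (Function.surjInv hsurj (π f))) = π (θ f) :=
      fun f => hwd _ _ (Function.surjInv_eq hsurj (π f))
    obtain ⟨f, rfl⟩ := hsurj x
    obtain ⟨g, rfl⟩ := hsurj y
    show π (θ (Function.surjInv hsurj (π f + π g))) =
      π (θ (Function.surjInv hsurj (π f))) + π (θ (Function.surjInv hsurj (π g)))
    rw [← map_add, hD, hD, hD, map_add, map_add]
  map_smul' c x := by
    have hD : ∀ f : A, π (θ (Function.surjInv hsurj (π f))) = π (θ f) :=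
      fun f => hwd _ _ (Function.surjInv_eq hsurj (π f))
    obtain ⟨f, rfl⟩ := hsurj x
    show π (θ (Function.surjInv hsurj (c • π f))) = c • π (θ (Function.surjInv hsurj (π f)))
    rw [← map_smul, hD, hD, Derivation.map_smul, map_smul]
  map_one_eq_zero' := by
    have hD : ∀ f : A, π (θ (Function.surjInv hsurj (π f))) = π (θ f) :=
      fun f => hwd _ _ (Function.surjInv_eq hsurj (π f))
    show π (θ (Function.surjInv hsurj 1)) = 0
    rw [show (1 : B) = π 1 from (map_one π).symm, hD, Derivation.map_one_eq_zero, map_zero]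
  leibniz' x y := by
    have hD : ∀ f : A, π (θ (Function.surjInv hsurj (π f))) = π (θ f) :=
      fun f => hwd _ _ (Function.surjInv_eq hsurj (π f))
    obtain ⟨f, rfl⟩ := hsurj x
    obtain ⟨g, rfl⟩ := hsurj y
    show π (θ (Function.surjInv hsurj (π f * π g))) =
      π f • π (θ (Function.surjInv hsurj (π g))) + π g • π (θ (Function.surjInv hsurj (π f)))
    rw [← map_mul, hD, hD, hD, Derivation.leibniz]
    simp only [smul_eq_mul, map_add, map_mul]

lemma pushDer_res (π : A →ₐ[ℂ] B) (hsurj : Function.Surjective π)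
    (θ : Derivation ℂ A A) (hwd : ∀ f g : A, π f = π g → π (θ f) = π (θ g)) (f : A) :
    pushDer π hsurj θ hwd (π f) = π (θ f) :=
  hwd _ _ (Function.surjInv_eq hsurj (π f))

end Push
set_option maxHeartbeats 4000000

/-- Every `θ ∈ D(A)` preserves the ideal `α₀ S` and induces a derivation `θ̄` of
`S̄ ≅ Sym(H₀^*)` (characterized by `θ̄ ∘ res = res ∘ θ` for the restriction map
`res : S → S̄`); moreover `θ̄ ∈ D(A'')`, and if `θ` is homogeneous of polynomial degree
`p` and `θ̄ ≠ 0` then `θ̄` is homogeneous of polynomial degree `p`. -/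
theorem induced_derivation (V : Type u) [AddCommGroup V] [Module ℂ V] [FiniteDimensional ℂ V]
    (A : Finset (Submodule ℂ V)) (hA : IsArrangement V A) (hne : A ≠ ∅)
    (H₀ : Submodule ℂ V) (hH₀ : H₀ ∈ A)
    (α₀ : V →ₗ[ℂ] ℂ) (hα₀ : α₀ ≠ 0 ∧ LinearMap.ker α₀ = H₀)
    (θ : Derivation ℂ (Poly V) (Poly V)) (hθ : θ ∈ DerA V A) (p : ℕ) :
    (∀ f : Poly V, (∃ g : Poly V, f = linToPoly V α₀ * g) →
      ∃ g : Poly V, θ f = linToPoly V α₀ * g) ∧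
    (∃ θbar : Derivation ℂ (Poly ↥H₀) (Poly ↥H₀),
      (∀ f : Poly V, θbar (resHom V H₀ f) = resHom V H₀ (θ f)) ∧
      θbar ∈ DerA ↥H₀ (restrict V A H₀) ∧
      (IsDerHomog V p θ → θbar ≠ 0 → IsDerHomog ↥H₀ p θbar)) := by
  classical
  -- choice of defining linear forms, with `α₀` at `H₀`
  set αc : Submodule ℂ V → (V →ₗ[ℂ] ℂ) :=
    fun H => if h : H ∈ A ∧ H ≠ H₀ then (hA H h.1).choose else α₀ with hαcdef
  have hαc : ∀ H ∈ A, αc H ≠ 0 ∧ LinearMap.ker (αc H) = H := by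
    intro H hH
    by_cases hne' : H = H₀
    · subst hne'
      simp only [hαcdef]
      rw [dif_neg (by tauto)]
      exact hα₀
    · simp only [hαcdef]
      rw [dif_pos ⟨hH, hne'⟩]
      exact ⟨(hA H hH).choose_spec.1, (hA H hH).choose_spec.2⟩
  have hαcH₀ : αc H₀ = α₀ := by
    simp only [hαcdef]
    rw [dif_neg (by tauto)]
  set Q : Poly V := ∏ H ∈ A, linToPoly V (αc H) with hQdef
  obtain ⟨F, hF⟩ := hθ Q ⟨αc, hαc, rfl⟩
  -- key divisibility: θ(α_H) ∈ α_H S for every H ∈ A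
  have hkey : ∀ H ∈ A, ∃ g : Poly V, θ (linToPoly V (αc H)) = linToPoly V (αc H) * g := by
    intro H₁ hH₁
    set a₁ := linToPoly V (αc H₁) with ha₁
    have hprime : Prime a₁ := prime_linToPoly (hαc H₁ hH₁).1
    set Q₁ : Poly V := ∏ H ∈ A.erase H₁, linToPoly V (αc H) with hQ₁
    have hsplit : Q = a₁ * Q₁ := by
      rw [hQdef, ha₁, hQ₁]
      exact (Finset.mul_prod_erase _ _ hH₁).symm
    have hθQ : θ Q = a₁ * θ Q₁ + Q₁ * θ a₁ := by
      rw [hsplit, Derivation.leibniz, smul_eq_mul, smul_eq_mul]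
    have h6 : a₁ * θ Q₁ + Q₁ * θ a₁ = (a₁ * Q₁) * F := by
      rw [← hθQ, ← hsplit]; exact hF
    have hdvd : a₁ ∣ Q₁ * θ a₁ := ⟨Q₁ * F - θ Q₁, by linear_combination h6⟩
    have hnd : ¬ a₁ ∣ Q₁ := by
      intro hd
      obtain ⟨H₂, hH₂, hd₂⟩ := hprime.exists_mem_finset_dvd hd
      have hH₂A : H₂ ∈ A := Finset.mem_of_mem_erase hH₂
      have hne12 : H₂ ≠ H₁ := Finset.ne_of_mem_erase hH₂
      obtain ⟨g, hg⟩ := hd₂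
      have hker : LinearMap.ker (αc H₁) ≤ LinearMap.ker (αc H₂) := by
        intro x hx
        rw [LinearMap.mem_ker] at hx ⊢
        have hgx := congrArg (fun f : Poly V => (f : V → ℂ) x) hg
        simpa [ha₁, hx] using hgx
      obtain ⟨c, hc⟩ := exists_smul_of_ker_le (hαc H₁ hH₁).1 hker
      have hc0 : c ≠ 0 := by
        rintro rfl
        rw [zero_smul] at hc
        exact (hαc H₂ hH₂A).1 hc
      exact hne12 (by
        rw [← (hαc H₂ hH₂A).2, ← (hαc H₁ hH₁).2, hc, LinearMap.ker_smul _ _ hc0])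
    obtain ⟨g, hg⟩ := (hprime.2.2 _ _ hdvd).resolve_left hnd
    exact ⟨g, hg⟩
  have hkey0 := hkey H₀ hH₀
  rw [hαcH₀] at hkey0
  obtain ⟨d, hd⟩ := hkey0
  -- Part 1
  have part1 : ∀ f : Poly V, (∃ g : Poly V, f = linToPoly V α₀ * g) →
      ∃ g : Poly V, θ f = linToPoly V α₀ * g := by
    rintro f ⟨g, rfl⟩
    exact ⟨θ g + d * g, by rw [Derivation.leibniz, smul_eq_mul, smul_eq_mul, hd]; ring⟩
  -- kernel of resHom
  have hres_dvd : ∀ f : Poly V, resHom V H₀ f = 0 → linToPoly V α₀ ∣ f := by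
    intro f h
    apply linToPoly_dvd_of_vanishing hα₀.1
    intro x hx
    exact (resHom_eq_zero_iff H₀ f).mp h x (by rw [← hα₀.2]; exact hx)
  have hres_a : resHom V H₀ (linToPoly V α₀) = 0 := by
    rw [resHom_eq_zero_iff]
    intro x hx
    rw [linToPoly_apply]
    rw [← hα₀.2] at hx
    exact hx
  -- well-definedness
  have hwd : ∀ f g : Poly V, resHom V H₀ f = resHom V H₀ g →
      resHom V H₀ (θ f) = resHom V H₀ (θ g) := by
    intro f g h
    have h0 : resHom V H₀ (f - g) = 0 := by rw [map_sub, h, sub_self]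
    obtain ⟨k, hk⟩ := hres_dvd _ h0
    obtain ⟨k2, hk2⟩ := part1 (f - g) ⟨k, hk⟩
    have h5 : resHom V H₀ (θ (f - g)) = 0 := by
      rw [hk2, map_mul, hres_a, zero_mul]
    rw [map_sub, map_sub, sub_eq_zero] at h5
    exact h5
  have hsurj := resHom_surjective (V := V) H₀
  set θbar : Derivation ℂ (Poly ↥H₀) (Poly ↥H₀) := pushDer (resHom V H₀) hsurj θ hwd
    with hθbardef
  have hcomm : ∀ f : Poly V, θbar (resHom V H₀ f) = resHom V H₀ (θ f) :=
    fun f => pushDer_res (resHom V H₀) hsurj θ hwd f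
  refine ⟨part1, θbar, hcomm, ?_, ?_⟩
  · -- membership in D(A'')
    rintro Q'' ⟨β, hβ, hQe⟩
    have hfac : ∀ K ∈ restrict V A H₀,
        ∃ h : Poly ↥H₀, θbar (linToPoly ↥H₀ (β K)) = linToPoly ↥H₀ (β K) * h := by
      intro K hK
      have hK' := hK
      simp only [restrict, Finset.mem_image, Finset.mem_filter] at hK'
      obtain ⟨H, ⟨hHA, hHle⟩, hKeq⟩ := hK'
      obtain ⟨g, hg⟩ := hkey H hHA
      set ψ : ↥H₀ →ₗ[ℂ] ℂ := (αc H).comp H₀.subtype with hψ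
      have hψ0 : ψ ≠ 0 := by
        intro h0
        apply hHle
        intro x hx
        rw [← (hαc H hHA).2, LinearMap.mem_ker]
        have := DFunLike.congr_fun h0 (⟨x, hx⟩ : ↥H₀)
        simpa [hψ] using this
      have hkerψ : LinearMap.ker ψ = K := by
        rw [hψ, LinearMap.ker_comp, (hαc H hHA).2, hKeq]
      have hkk : LinearMap.ker ψ ≤ LinearMap.ker (β K) := by
        rw [hkerψ, (hβ K hK).2]
      obtain ⟨c, hc⟩ := exists_smul_of_ker_le hψ0 hkk
      have h1 : linToPoly ↥H₀ ψ = resHom V H₀ (linToPoly V (αc H)) :=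
        (resHom_lin H₀ (αc H)).symm
      have hstep : θbar (linToPoly ↥H₀ ψ) = linToPoly ↥H₀ ψ * resHom V H₀ g := by
        rw [h1, hcomm, hg, map_mul, ← h1]
      refine ⟨resHom V H₀ g, ?_⟩
      have hlsm : linToPoly ↥H₀ (β K) = c • linToPoly ↥H₀ ψ := by
        rw [hc, linToPoly_smul]
      rw [hlsm, Derivation.map_smul, hstep, smul_mul_assoc]
    have hprod : ∀ s : Finset (Submodule ℂ ↥H₀), (∀ K ∈ s, K ∈ restrict V A H₀) →
        ∃ h : Poly ↥H₀, θbar (∏ K ∈ s, linToPoly ↥H₀ (β K)) =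
          (∏ K ∈ s, linToPoly ↥H₀ (β K)) * h := by
      intro s
      induction s using Finset.induction_on with
      | empty => intro _; exact ⟨0, by simp⟩
      | @insert K s hK ih =>
          intro hsub
          obtain ⟨h₁, e₁⟩ := hfac K (hsub K (Finset.mem_insert_self K s))
          obtain ⟨h₂, e₂⟩ := ih (fun L hL => hsub L (Finset.mem_insert_of_mem hL))
          refine ⟨h₂ + h₁, ?_⟩
          rw [Finset.prod_insert hK, Derivation.leibniz, smul_eq_mul, smul_eq_mul, e₁, e₂]
          ring
    obtain ⟨h, hh⟩ := hprod (restrict V A H₀) (fun _ hK => hK)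
    exact ⟨h, by rw [hQe]; exact hh⟩
  · -- homogeneity
    intro hhom _ ψ t x
    obtain ⟨φ, hφ⟩ := LinearMap.exists_extend ψ
    have h1 : linToPoly ↥H₀ ψ = resHom V H₀ (linToPoly V φ) := by
      rw [resHom_lin, hφ]
    rw [h1, hcomm]
    have := hhom φ t ↑x
    simpa using this

end IndFreeArr
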